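/- For B2 at p=2, the four cosets of Λ^⊕ = √2Λ_R^∨(B2) in its dual (1/√2)Λ_W have groundstate conformal dimensions 0, −1/4, 0, 1/4 (for the cosets [0], [λ2/√2], [λ1/√2], [(λ1+λ2)/√2] respectively), with respective numbers of groundstates 2, 1, 2, 4. -/

import Mathlib

open scoped RealInnerProductSpace

lemma nn1 (n : ℤ) : 0 ≤ n * (n - 1) := by
  rcases le_or_gt n 0 with h | h
  · have h' : n - 1 ≤ 0 := by omega
    have := mul_nonneg (neg_nonneg.mpr h) (neg_nonneg.mpr h')
    nlinarith
  · exact mul_nonneg (by omega) (by omega)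

lemma nn2 (n : ℤ) : 0 ≤ n * (n + 1) := by
  have := nn1 (n + 1)
  nlinarith

lemma sol0 (m n : ℤ) (h : (m - n)^2 + n*(n-1) = 0) : (m = 0 ∧ n = 0) ∨ (m = 1 ∧ n = 1) := by
  have h1 := sq_nonneg (m - n)
  have h2 := nn1 n
  have e1 : m - n = 0 := sq_eq_zero_iff.mp (by linarith)
  have e2 : n * (n - 1) = 0 := by linarith
  rcases mul_eq_zero.mp e2 with h3 | h3 <;> omega

lemma solQ (m n : ℤ) (h : (m - n)^2 + n^2 = 0) : m = 0 ∧ n = 0 := by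
  have h1 := sq_nonneg (m - n)
  have h2 := sq_nonneg n
  have e1 : m - n = 0 := sq_eq_zero_iff.mp (by linarith)
  have e2 : n = 0 := sq_eq_zero_iff.mp (by linarith)
  omega

lemma oddsq (k : ℤ) : 1 ≤ (2*k+1)^2 := by nlinarith [nn2 k]

lemma sol1 (m n : ℤ) (h : (2*(m-n)+1)^2 + 4*n^2 = 1) : n = 0 ∧ (m = 0 ∨ m = -1) := by
  have h1 := oddsq (m - n)
  have h2 := sq_nonneg n
  have e2 : n = 0 := sq_eq_zero_iff.mp (by linarith)
  have e1 : (2*(m-n)+1)^2 = 1 := by nlinarith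
  have : (2*(m-n)) * (2*(m-n)+2) = 0 := by nlinarith
  rcases mul_eq_zero.mp this with h3 | h3 <;> omega

lemma sol2 (m n : ℤ) (h : (2*(m-n)+1)^2 + (2*n+1)^2 = 2) :
    (m = 0 ∧ n = 0) ∨ (m = -1 ∧ n = 0) ∨ (m = -1 ∧ n = -1) ∨ (m = -2 ∧ n = -1) := by
  have h1 := oddsq (m - n)
  have h2 := oddsq n
  have e1 : (2*(m-n)+1)^2 = 1 := by linarith
  have e2 : (2*n+1)^2 = 1 := by linarith
  have f1 : (2*(m-n)) * (2*(m-n)+2) = 0 := by nlinarith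
  have f2 : (2*n) * (2*n+2) = 0 := by nlinarith
  rcases mul_eq_zero.mp f1 with h3 | h3 <;> rcases mul_eq_zero.mp f2 with h4 | h4 <;> omega

set_option maxHeartbeats 2000000 in
/-- For `B2` at `p = 2`, the four cosets of `Λ^⊕ = √2Λ_R^∨(B2)` (generated by `α1/√2` and
`√2α2`) in its dual `(1/√2)Λ_W` have groundstate conformal dimensions `0, −1/4, 0, 1/4`
(for the cosets `[0]`, `[λ2/√2] = [Q]`, `[λ1/√2]`, `[(λ1+λ2)/√2]` respectively), with
respective numbers of groundstates `2, 1, 2, 4`. Here `h(μ) = (1/2)‖μ−Q‖² − (1/2)‖Q‖²`,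
`Q = α1/(2√2) + α2/√2`, `λ1/√2 = (α1+α2)/√2`. -/
theorem stmt_18 {V : Type*} [NormedAddCommGroup V] [InnerProductSpace ℝ V]
    (α1 α2 : V) (h11 : ⟪α1, α1⟫ = 4) (h12 : ⟪α1, α2⟫ = -2) (h22 : ⟪α2, α2⟫ = 2)
    (hlin : LinearIndependent ℝ ![α1, α2]) :
    let Q : V := (1/(2 * Real.sqrt 2)) • α1 + (Real.sqrt 2)⁻¹ • α2
    let lam1 : V := (Real.sqrt 2)⁻¹ • (α1 + α2)
    let L : Submodule ℤ V := Submodule.span ℤ {(Real.sqrt 2)⁻¹ • α1, Real.sqrt 2 • α2}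
    let h : V → ℝ := fun μ => 1/2 * ⟪μ - Q, μ - Q⟫ - 1/2 * ⟪Q, Q⟫
    ((∀ μ : V, μ - 0 ∈ L → 0 ≤ h μ) ∧ Set.ncard {μ : V | μ - 0 ∈ L ∧ h μ = 0} = 2)
    ∧ ((∀ μ : V, μ - Q ∈ L → -(1/4) ≤ h μ)
        ∧ Set.ncard {μ : V | μ - Q ∈ L ∧ h μ = -(1/4)} = 1)
    ∧ ((∀ μ : V, μ - lam1 ∈ L → 0 ≤ h μ)
        ∧ Set.ncard {μ : V | μ - lam1 ∈ L ∧ h μ = 0} = 2)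
    ∧ ((∀ μ : V, μ - (lam1 + Q) ∈ L → 1/4 ≤ h μ)
        ∧ Set.ncard {μ : V | μ - (lam1 + Q) ∈ L ∧ h μ = 1/4} = 4) := by
  intro Q lam1 L h
  have s2 : Real.sqrt 2 * Real.sqrt 2 = 2 := Real.mul_self_sqrt (by norm_num)
  have s2ne : Real.sqrt 2 ≠ 0 := by positivity
  set e1 : V := (Real.sqrt 2)⁻¹ • α1 with he1
  set e2 : V := Real.sqrt 2 • α2 with he2
  have h21 : ⟪α2, α1⟫ = -2 := by rw [real_inner_comm]; exact h12
  have he11 : ⟪e1, e1⟫ = 2 := by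
    rw [he1, real_inner_smul_left, real_inner_smul_right, h11]
    field_simp
    nlinarith [s2]
  have he12 : ⟪e1, e2⟫ = -2 := by
    rw [he1, he2, real_inner_smul_left, real_inner_smul_right, h12]
    field_simp
  have he21 : ⟪e2, e1⟫ = -2 := by rw [real_inner_comm]; exact he12
  have he22 : ⟪e2, e2⟫ = 4 := by
    rw [he2, real_inner_smul_left, real_inner_smul_right, h22]
    nlinarith [s2]
  have hq : ∀ u v : ℝ, ⟪u•e1 + v•e2, u•e1 + v•e2⟫ = 2*(u-v)^2 + 2*v^2 := by
    intro u v
    simp only [inner_add_left, inner_add_right, real_inner_smul_left, real_inner_smul_right,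
      he11, he12, he21, he22]
    ring
  have hQ : Q = (1/2 : ℝ) • e1 + (1/2 : ℝ) • e2 := by
    show (1/(2 * Real.sqrt 2)) • α1 + (Real.sqrt 2)⁻¹ • α2 = _
    rw [he1, he2]
    match_scalars
    · field_simp
    · field_simp
      rw [sq, s2]
  have hlam : lam1 = (1 : ℝ) • e1 + (1/2 : ℝ) • e2 := by
    show (Real.sqrt 2)⁻¹ • (α1 + α2) = _
    rw [he1, he2]
    match_scalars
    · field_simp
    · field_simp
      rw [sq, s2]
  have hb4 : lam1 + Q = (3/2 : ℝ) • e1 + (1 : ℝ) • e2 := by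
    rw [hlam, hQ]; module
  have hform : ∀ x y : ℝ, h (x•e1 + y•e2) = (x-y)^2 + (y-1/2)^2 - 1/4 := by
    intro x y
    show 1/2 * ⟪_ - Q, _ - Q⟫ - 1/2 * ⟪Q, Q⟫ = _
    rw [hQ]
    have hd : x•e1 + y•e2 - ((1/2:ℝ)•e1 + (1/2:ℝ)•e2) = (x-1/2)•e1 + (y-1/2)•e2 := by
      module
    rw [hd, hq, hq]
    ring
  have hzero : ∀ u v : ℝ, u•e1 + v•e2 = 0 → u = 0 ∧ v = 0 := by
    intro u v huv
    have h0 : 2*(u-v)^2 + 2*v^2 = 0 := by rw [← hq u v, huv, inner_zero_left]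
    have hv : v = 0 := by
      have h3 : v^2 = 0 := by nlinarith [sq_nonneg (u-v), sq_nonneg v]
      exact sq_eq_zero_iff.mp h3
    have hu : u = 0 := by
      have h3 : (u-v)^2 = 0 := by nlinarith [sq_nonneg (u-v), sq_nonneg v]
      have := sq_eq_zero_iff.mp h3
      linarith
    exact ⟨hu, hv⟩
  have hinj : ∀ {u v u' v' : ℝ}, u•e1 + v•e2 = u'•e1 + v'•e2 → u = u' ∧ v = v' := by
    intro u v u' v' heq
    have hz : (u - u')•e1 + (v - v')•e2 = 0 := by
      rw [← sub_eq_zero_of_eq heq]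
      module
    obtain ⟨h1, h2⟩ := hzero _ _ hz
    constructor <;> linarith
  have hneV : ∀ {u v u' v' : ℝ}, (u ≠ u' ∨ v ≠ v') → u•e1 + v•e2 ≠ u'•e1 + v'•e2 := by
    intro u v u' v' hne heq
    obtain ⟨h1, h2⟩ := hinj heq
    rcases hne with hne | hne
    exacts [hne h1, hne h2]
  have hmemL : ∀ x : V, x ∈ L ↔ ∃ m n : ℤ, (m:ℝ)•e1 + (n:ℝ)•e2 = x := by
    intro x
    have hLd : L = Submodule.span ℤ {e1, e2} := rfl
    rw [hLd, Submodule.mem_span_pair]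
    exact exists_congr fun m => exists_congr fun n => by
      rw [Int.cast_smul_eq_zsmul, Int.cast_smul_eq_zsmul]
  have coset : ∀ (cx cy : ℝ) (μ : V),
      μ - (cx•e1 + cy•e2) ∈ L ↔ ∃ m n : ℤ, μ = (cx + m)•e1 + (cy + n)•e2 := by
    intro cx cy μ
    rw [hmemL]
    constructor
    · rintro ⟨m, n, hmn⟩
      refine ⟨m, n, ?_⟩
      have hμ : μ = ((m:ℝ)•e1 + (n:ℝ)•e2) + (cx•e1 + cy•e2) := by
        rw [hmn]; abel
      rw [hμ]; module
    · rintro ⟨m, n, rfl⟩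
      exact ⟨m, n, by module⟩
  refine ⟨⟨?_, ?_⟩, ⟨?_, ?_⟩, ⟨?_, ?_⟩, ⟨?_, ?_⟩⟩
  -- coset [0], lower bound
  · intro μ hμ
    have hμ' : μ - ((0:ℝ)•e1 + (0:ℝ)•e2) ∈ L := by simpa using hμ
    obtain ⟨m, n, rfl⟩ := (coset 0 0 μ).mp hμ'
    rw [hform]
    have key : (0:ℤ) ≤ (m - n)^2 + n*(n-1) := add_nonneg (sq_nonneg _) (nn1 n)
    have keyR : (0:ℝ) ≤ ((m:ℝ) - n)^2 + (n:ℝ)*((n:ℝ)-1) := by exact_mod_cast key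
    nlinarith [keyR]
  -- coset [0], ncard
  · have hset : {μ : V | μ - 0 ∈ L ∧ h μ = 0}
        = {(0:ℝ)•e1 + (0:ℝ)•e2, (1:ℝ)•e1 + (1:ℝ)•e2} := by
      ext μ
      simp only [Set.mem_setOf_eq, Set.mem_insert_iff, Set.mem_singleton_iff]
      constructor
      · rintro ⟨hμ, hval⟩
        obtain ⟨m, n, rfl⟩ := (coset 0 0 μ).mp (by simpa using hμ)
        rw [hform] at hval
        have hzz : ((m - n)^2 + n*(n-1) : ℤ) = 0 := by
          have : (((m - n)^2 + n*(n-1) : ℤ) : ℝ) = 0 := by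
            push_cast
            linear_combination hval
          exact_mod_cast this
        rcases sol0 m n hzz with ⟨hm, hn⟩ | ⟨hm, hn⟩
        · left; subst hm; subst hn; norm_num
        · right; subst hm; subst hn; norm_num
      · rintro (rfl | rfl)
        · refine ⟨by simpa using (coset 0 0 _).mpr ⟨0, 0, by norm_num⟩, ?_⟩
          rw [hform]; norm_num
        · refine ⟨by simpa using (coset 0 0 _).mpr ⟨1, 1, by norm_num⟩, ?_⟩
          rw [hform]; norm_num
    rw [hset, Set.ncard_pair (hneV (Or.inl (by norm_num)))]
  -- coset [Q], lower bound
  · intro μ hμ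
    rw [hQ] at hμ
    obtain ⟨m, n, rfl⟩ := (coset (1/2) (1/2) μ).mp hμ
    rw [hform]
    nlinarith [sq_nonneg ((m:ℝ) - n), sq_nonneg (n:ℝ)]
  -- coset [Q], ncard
  · have hset : {μ : V | μ - Q ∈ L ∧ h μ = -(1/4)}
        = {(1/2:ℝ)•e1 + (1/2:ℝ)•e2} := by
      ext μ
      simp only [Set.mem_setOf_eq, Set.mem_singleton_iff]
      constructor
      · rintro ⟨hμ, hval⟩
        rw [hQ] at hμ
        obtain ⟨m, n, rfl⟩ := (coset (1/2) (1/2) μ).mp hμ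
        rw [hform] at hval
        have hzz : ((m - n)^2 + n^2 : ℤ) = 0 := by
          have : (((m - n)^2 + n^2 : ℤ) : ℝ) = 0 := by
            push_cast
            linear_combination hval
          exact_mod_cast this
        obtain ⟨hm, hn⟩ := solQ m n hzz
        subst hm; subst hn; norm_num
      · rintro rfl
        refine ⟨?_, ?_⟩
        · rw [hQ]
          exact (coset (1/2) (1/2) _).mpr ⟨0, 0, by norm_num⟩
        · rw [hform]; norm_num
    rw [hset, Set.ncard_singleton]
  -- coset [lam1], lower bound
  · intro μ hμ
    rw [hlam] at hμ
    obtain ⟨m, n, rfl⟩ := (coset 1 (1/2) μ).mp hμ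
    rw [hform]
    have key : (1:ℤ) ≤ (2*(m-n)+1)^2 := oddsq (m - n)
    have keyR : (1:ℝ) ≤ (2*((m:ℝ) - n)+1)^2 := by exact_mod_cast key
    nlinarith [keyR, sq_nonneg (n:ℝ)]
  -- coset [lam1], ncard
  · have hset : {μ : V | μ - lam1 ∈ L ∧ h μ = 0}
        = {(1:ℝ)•e1 + (1/2:ℝ)•e2, (0:ℝ)•e1 + (1/2:ℝ)•e2} := by
      ext μ
      simp only [Set.mem_setOf_eq, Set.mem_insert_iff, Set.mem_singleton_iff]
      constructor
      · rintro ⟨hμ, hval⟩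
        rw [hlam] at hμ
        obtain ⟨m, n, rfl⟩ := (coset 1 (1/2) μ).mp hμ
        rw [hform] at hval
        have hzz : ((2*(m-n)+1)^2 + 4*n^2 : ℤ) = 1 := by
          have : (((2*(m-n)+1)^2 + 4*n^2 : ℤ) : ℝ) = 1 := by
            push_cast
            linear_combination 4 * hval
          exact_mod_cast this
        obtain ⟨hn, hm⟩ := sol1 m n hzz
        subst hn
        rcases hm with hm | hm
        · left; subst hm; norm_num
        · right; subst hm; norm_num
      · rintro (rfl | rfl)
        · refine ⟨?_, by rw [hform]; norm_num⟩
          rw [hlam]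
          exact (coset 1 (1/2) _).mpr ⟨0, 0, by norm_num⟩
        · refine ⟨?_, by rw [hform]; norm_num⟩
          rw [hlam]
          exact (coset 1 (1/2) _).mpr ⟨-1, 0, by push_cast; norm_num⟩
    rw [hset, Set.ncard_pair (hneV (Or.inl (by norm_num)))]
  -- coset [lam1 + Q], lower bound
  · intro μ hμ
    rw [hb4] at hμ
    obtain ⟨m, n, rfl⟩ := (coset (3/2) 1 μ).mp hμ
    rw [hform]
    have key1 : (1:ℤ) ≤ (2*(m-n)+1)^2 := oddsq (m - n)
    have key2 : (1:ℤ) ≤ (2*n+1)^2 := oddsq n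
    have keyR1 : (1:ℝ) ≤ (2*((m:ℝ) - n)+1)^2 := by exact_mod_cast key1
    have keyR2 : (1:ℝ) ≤ (2*(n:ℝ)+1)^2 := by exact_mod_cast key2
    nlinarith [keyR1, keyR2]
  -- coset [lam1 + Q], ncard
  · have hset : {μ : V | μ - (lam1 + Q) ∈ L ∧ h μ = 1/4}
        = {(3/2:ℝ)•e1 + (1:ℝ)•e2, (1/2:ℝ)•e1 + (1:ℝ)•e2,
           (1/2:ℝ)•e1 + (0:ℝ)•e2, (-1/2:ℝ)•e1 + (0:ℝ)•e2} := by
      ext μ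
      simp only [Set.mem_setOf_eq, Set.mem_insert_iff, Set.mem_singleton_iff]
      constructor
      · rintro ⟨hμ, hval⟩
        rw [hb4] at hμ
        obtain ⟨m, n, rfl⟩ := (coset (3/2) 1 μ).mp hμ
        rw [hform] at hval
        have hzz : ((2*(m-n)+1)^2 + (2*n+1)^2 : ℤ) = 2 := by
          have : (((2*(m-n)+1)^2 + (2*n+1)^2 : ℤ) : ℝ) = 2 := by
            push_cast
            linear_combination 4 * hval
          exact_mod_cast this
        rcases sol2 m n hzz with ⟨hm, hn⟩ | ⟨hm, hn⟩ | ⟨hm, hn⟩ | ⟨hm, hn⟩ <;>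
          subst hm <;> subst hn
        · left; norm_num
        · right; left; norm_num
        · right; right; left; norm_num
        · right; right; right; norm_num
      · rintro (rfl | rfl | rfl | rfl)
        · refine ⟨?_, by rw [hform]; norm_num⟩
          rw [hb4]
          exact (coset (3/2) 1 _).mpr ⟨0, 0, by norm_num⟩
        · refine ⟨?_, by rw [hform]; norm_num⟩
          rw [hb4]
          exact (coset (3/2) 1 _).mpr ⟨-1, 0, by push_cast; norm_num⟩
        · refine ⟨?_, by rw [hform]; norm_num⟩
          rw [hb4]
          exact (coset (3/2) 1 _).mpr ⟨-1, -1, by push_cast; norm_num⟩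
        · refine ⟨?_, by rw [hform]; norm_num⟩
          rw [hb4]
          exact (coset (3/2) 1 _).mpr ⟨-2, -1, by push_cast; norm_num⟩
    rw [hset]
    rw [Set.ncard_insert_of_notMem (by
      simp only [Set.mem_insert_iff, Set.mem_singleton_iff]
      push_neg
      exact ⟨hneV (Or.inl (by norm_num)), hneV (Or.inl (by norm_num)),
        hneV (Or.inl (by norm_num))⟩)]
    rw [Set.ncard_insert_of_notMem (by
      simp only [Set.mem_insert_iff, Set.mem_singleton_iff]
      push_neg
      exact ⟨hneV (Or.inr (by norm_num)), hneV (Or.inl (by norm_num))⟩)]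
    rw [Set.ncard_pair (hneV (Or.inl (by norm_num)))]
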